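/- Let δ ≥ 1 and κ, n > 0, and define Φ : (0,∞) → (0,∞) by Φ(r) = ((κn)^{1/δ}/(2κ)) · ∫_{(κn)^{1/δ}/r}^{∞} v^{δ−2}/(v^{δ}+1) dv. Then: (a) Φ is finite-valued, differentiable with Φ'(r) = n/(2(κn + r^{δ})) for all r > 0, strictly increasing, and concave; (b) Φ is bounded on (0,∞) if and only if δ > 1; (c) ∫₀^∞ Φ(s²)/s² ds < ∞. Moreover, for every r > 0 one has ∫₀^∞ ( κn / ( e^{2δκt}·(1 + κn/r^{δ}) − 1 ) )^{1/δ} dt = Φ(r). -/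

import Mathlib

open Real Filter MeasureTheory Set

open Topology

namespace Stmt1Aux

lemma f_contOn {δ : ℝ} : ContinuousOn (fun v : ℝ => v ^ (δ - 2) / (v ^ δ + 1)) (Ioi 0) := by
  apply ContinuousOn.div
  · exact fun v hv => (continuousAt_id.rpow_const (Or.inl (ne_of_gt hv))).continuousWithinAt
  · exact fun v hv => ((continuousAt_id.rpow_const (Or.inl (ne_of_gt hv))).add
      continuousAt_const).continuousWithinAt
  · intro v hv
    have hv' : (0:ℝ) < v := hv
    positivity

lemma f_pos {δ v : ℝ} (hv : 0 < v) : 0 < v ^ (δ - 2) / (v ^ δ + 1) := by positivity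

lemma f_le {δ v : ℝ} (hv : 0 < v) : v ^ (δ - 2) / (v ^ δ + 1) ≤ v ^ (-2 : ℝ) := by
  have h1 : v ^ (-2 : ℝ) = v ^ (δ - 2) / v ^ δ := by
    rw [← Real.rpow_sub hv]; ring_nf
  rw [h1]
  apply div_le_div_of_nonneg_left (by positivity) (by positivity)
  linarith [Real.rpow_pos_of_pos hv δ]

lemma f_int {δ c : ℝ} (hc : 0 < c) :
    IntegrableOn (fun v : ℝ => v ^ (δ - 2) / (v ^ δ + 1)) (Ioi c) := by
  apply Integrable.mono' (g := fun v : ℝ => v ^ (-2 : ℝ))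
    (integrableOn_Ioi_rpow_of_lt (by norm_num) hc)
  · exact (f_contOn.mono (Ioi_subset_Ioi hc.le)).aestronglyMeasurable measurableSet_Ioi
  · filter_upwards [ae_restrict_mem measurableSet_Ioi] with v hv
    have hv0 : 0 < v := hc.trans hv
    rw [Real.norm_eq_abs, abs_of_nonneg (f_pos hv0).le]
    exact f_le hv0

lemma integral_split {δ c z : ℝ} (hc : 0 < c) (hz : 0 < z) :
    (∫ v in Ioi z, v ^ (δ - 2) / (v ^ δ + 1))
      = (∫ v in Ioi c, v ^ (δ - 2) / (v ^ δ + 1))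
        - ∫ v in c..z, v ^ (δ - 2) / (v ^ δ + 1) := by
  have huni : ∀ x y : ℝ, 0 < x → x ≤ y →
      (∫ v in Ioi x, v ^ (δ - 2) / (v ^ δ + 1))
        = (∫ v in Ioc x y, v ^ (δ - 2) / (v ^ δ + 1))
          + ∫ v in Ioi y, v ^ (δ - 2) / (v ^ δ + 1) := by
    intro x y hx hxy
    rw [← setIntegral_union (Ioc_disjoint_Ioi le_rfl) measurableSet_Ioi
      ((f_int hx).mono_set Ioc_subset_Ioi_self)
      (f_int (hx.trans_le hxy)), Ioc_union_Ioi_eq_Ioi hxy]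
  rcases le_total c z with h | h
  · rw [intervalIntegral.integral_of_le h, huni c z hc h]; ring
  · rw [intervalIntegral.integral_of_ge h, huni z c hz h]; ring

lemma rpow_sub_two {x : ℝ} (hx : 0 < x) (δ : ℝ) : x ^ (δ - 2) = x ^ δ / x ^ 2 := by
  rw [Real.rpow_sub hx, Real.rpow_two]

lemma hasDerivAt_Phi {δ κ n : ℝ} (hδ : 1 ≤ δ) (hκ : 0 < κ) (hn : 0 < n)
    {Φ : ℝ → ℝ}
    (hΦ : ∀ r : ℝ, Φ r = ((κ * n) ^ (1/δ) / (2 * κ)) *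
        ∫ v in Ioi ((κ * n) ^ (1/δ) / r), v ^ (δ - 2) / (v ^ δ + 1))
    {r : ℝ} (hr : 0 < r) :
    HasDerivAt Φ (n / (2 * (κ * n + r ^ δ))) r := by
  have hδ0 : 0 < δ := lt_of_lt_of_le one_pos hδ
  have hκn : 0 < κ * n := mul_pos hκ hn
  set a : ℝ := (κ * n) ^ (1/δ) with ha_def
  have ha : 0 < a := Real.rpow_pos_of_pos hκn _
  have haδ : a ^ δ = κ * n := by
    rw [ha_def, ← Real.rpow_mul hκn.le, one_div_mul_cancel (ne_of_gt hδ0), Real.rpow_one]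
  set c : ℝ := a / r with hc_def
  have hc : 0 < c := div_pos ha hr
  set f : ℝ → ℝ := fun v => v ^ (δ - 2) / (v ^ δ + 1) with hf_def
  have key : ∀ s ∈ Ioi (0:ℝ), Φ s
      = (a / (2 * κ)) * ((∫ v in Ioi c, f v) - ∫ v in c..(a/s), f v) := by
    intro s hs
    rw [hΦ s, integral_split hc (div_pos ha hs)]
  have hH : HasDerivAt (fun z => ∫ v in c..z, f v) (f c) c := by
    apply intervalIntegral.integral_hasDerivAt_right
    · apply ContinuousOn.intervalIntegrable
      apply f_contOn.mono
      rw [Set.uIcc_self]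
      exact singleton_subset_iff.2 hc
    · exact ContinuousOn.stronglyMeasurableAtFilter isOpen_Ioi f_contOn c hc
    · exact f_contOn.continuousAt (isOpen_Ioi.mem_nhds hc)
  have hinner : HasDerivAt (fun s : ℝ => a / s) (a * -(r ^ 2)⁻¹) r := by
    simpa only [div_eq_mul_inv] using (hasDerivAt_inv (ne_of_gt hr)).const_mul a
  have hcomp : HasDerivAt (fun s : ℝ => ∫ v in c..(a/s), f v) (f c * (a * -(r ^ 2)⁻¹)) r :=
    by
      have h := HasDerivAt.comp r
        (show HasDerivAt (fun z => ∫ v in c..z, f v) (f c) (a / r) from hH) hinner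
      exact h
  have hmain : HasDerivAt (fun s : ℝ =>
      (a / (2 * κ)) * ((∫ v in Ioi c, f v) - ∫ v in c..(a/s), f v))
      ((a / (2 * κ)) * (0 - f c * (a * -(r ^ 2)⁻¹))) r :=
    ((hasDerivAt_const r _).sub hcomp).const_mul _
  have heq : Φ =ᶠ[𝓝 r] fun s : ℝ =>
      (a / (2 * κ)) * ((∫ v in Ioi c, f v) - ∫ v in c..(a/s), f v) := by
    filter_upwards [isOpen_Ioi.mem_nhds (show r ∈ Ioi 0 from hr)] with s hs
    exact key s hs
  have hfinal := hmain.congr_of_eventuallyEq heq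
  refine hfinal.congr_deriv ?_
  symm
  have hrδ : 0 < r ^ δ := Real.rpow_pos_of_pos hr δ
  have hcδ : c ^ δ = (κ * n) / r ^ δ := by
    rw [hc_def, Real.div_rpow ha.le hr.le, haδ]
  have hfc : f c = c ^ (δ - 2) / (c ^ δ + 1) := rfl
  rw [hfc, rpow_sub_two hc δ, hcδ, hc_def, div_pow]
  have h1 : κ * n + r ^ δ ≠ 0 := by positivity
  have h2 : a ≠ 0 := ne_of_gt ha
  have h3 : r ≠ 0 := ne_of_gt hr
  have h4 : r ^ δ ≠ 0 := ne_of_gt hrδ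
  have h5 : κ ≠ 0 := ne_of_gt hκ
  field_simp
  ring

lemma integral_f_pos {δ c : ℝ} (hc : 0 < c) :
    0 < ∫ v in Ioi c, v ^ (δ - 2) / (v ^ δ + 1) := by
  rw [setIntegral_pos_iff_support_of_nonneg_ae ?h1 (f_int hc)]
  case h1 =>
    filter_upwards [ae_restrict_mem measurableSet_Ioi] with v hv
    exact (f_pos (hc.trans hv)).le
  refine lt_of_lt_of_le ?_ (measure_mono (fun v hv =>
    ⟨ne_of_gt (f_pos (hc.trans hv)), hv⟩ :
    Ioi c ⊆ Function.support (fun v : ℝ => v ^ (δ - 2) / (v ^ δ + 1)) ∩ Ioi c))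
  rw [Real.volume_Ioi]
  exact ENNReal.zero_lt_top

lemma integral_f_le {δ c : ℝ} (hc : 0 < c) :
    (∫ v in Ioi c, v ^ (δ - 2) / (v ^ δ + 1)) ≤ c⁻¹ := by
  have h2 : (∫ v in Ioi c, v ^ (-2 : ℝ)) = c⁻¹ := by
    rw [integral_Ioi_rpow_of_lt (by norm_num) hc]
    norm_num [Real.rpow_neg_one]
  rw [← h2]
  apply setIntegral_mono_on (f_int hc) (integrableOn_Ioi_rpow_of_lt (by norm_num) hc)
    measurableSet_Ioi
  intro v hv
  exact f_le (hc.trans hv)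

lemma subst_lemma {δ κ n r : ℝ} (hδ : 1 ≤ δ) (hκ : 0 < κ) (hn : 0 < n) (hr : 0 < r) :
    IntegrableOn (fun t : ℝ =>
        (κ * n / (Real.exp (2 * δ * κ * t) * (1 + κ * n / r ^ δ) - 1)) ^ (1/δ)) (Ioi 0)
    ∧ (∫ t in Ioi (0:ℝ),
        (κ * n / (Real.exp (2 * δ * κ * t) * (1 + κ * n / r ^ δ) - 1)) ^ (1/δ))
      = ((κ * n) ^ (1/δ) / (2 * κ)) *
        ∫ v in Ioi ((κ * n) ^ (1/δ) / r), v ^ (δ - 2) / (v ^ δ + 1) := by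
  have hδ0 : 0 < δ := lt_of_lt_of_le one_pos hδ
  have hκn : 0 < κ * n := mul_pos hκ hn
  have hrδ : 0 < r ^ δ := Real.rpow_pos_of_pos hr δ
  set a : ℝ := (κ * n) ^ (1/δ) with ha_def
  have ha : 0 < a := Real.rpow_pos_of_pos hκn _
  have haδ : a ^ δ = κ * n := by
    rw [ha_def, ← Real.rpow_mul hκn.le, one_div_mul_cancel (ne_of_gt hδ0), Real.rpow_one]
  set c : ℝ := a / r with hc_def
  have hc : 0 < c := div_pos ha hr
  have hcδ : c ^ δ = κ * n / r ^ δ := by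
    rw [hc_def, Real.div_rpow ha.le hr.le, haδ]
  set B : ℝ := 1 + κ * n / r ^ δ with hB_def
  have hB1 : 1 < B := by
    rw [hB_def]; nlinarith [div_pos hκn hrδ]
  have hB0 : 0 < B := lt_trans one_pos hB1
  set E : ℝ → ℝ := fun t => Real.exp (2 * δ * κ * t) * B with hE_def
  have hEpos : ∀ t : ℝ, 0 < E t := fun t => mul_pos (Real.exp_pos _) hB0
  have hEgt : ∀ t : ℝ, 0 < t → B < E t := by
    intro t ht
    have hx : 0 < 2 * δ * κ * t := by positivity
    have h1 : 1 < Real.exp (2 * δ * κ * t) := by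
      calc (1:ℝ) = Real.exp 0 := Real.exp_zero.symm
        _ < _ := Real.exp_lt_exp.2 hx
    rw [hE_def]
    simpa using mul_lt_mul_of_pos_right h1 hB0
  have hw : ∀ t : ℝ, 0 < t → c ^ δ < E t - 1 := by
    intro t ht
    have := hEgt t ht
    rw [hcδ]
    simp only [hB_def] at this
    linarith
  have hw0 : ∀ t : ℝ, 0 < t → 0 < E t - 1 := by
    intro t ht
    have := hw t ht
    have h2 : 0 < c ^ δ := Real.rpow_pos_of_pos hc δ
    linarith
  set F : ℝ → ℝ := fun t => (E t - 1) ^ (1/δ) with hF_def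
  set F' : ℝ → ℝ := fun t => 1/δ * (E t - 1) ^ (1/δ - 1) * (2 * δ * κ * E t) with hF'_def
  -- derivative of E
  have hEderiv : ∀ t : ℝ, HasDerivAt E (2 * δ * κ * E t) t := by
    intro t
    have h1 : HasDerivAt (fun t : ℝ => 2 * δ * κ * t) (2 * δ * κ) t := by
      simpa using (hasDerivAt_id t).const_mul (2 * δ * κ)
    have h2 := (Real.hasDerivAt_exp (2 * δ * κ * t)).comp t h1
    have h3 := h2.mul_const B
    refine h3.congr_deriv ?_
    symm
    rw [hE_def]; ring
  have hFderiv : ∀ t : ℝ, 0 < t → HasDerivAt F (F' t) t := by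
    intro t ht
    have h1 := (Real.hasDerivAt_rpow_const (x := E t - 1) (p := 1/δ)
      (Or.inl (ne_of_gt (hw0 t ht)))).comp t ((hEderiv t).sub_const 1)
    exact h1
  -- strict monotonicity of F on Ioi 0
  have hFmono : StrictMonoOn F (Ioi 0) := by
    intro t₁ ht₁ t₂ ht₂ h12
    have hE12 : E t₁ < E t₂ := by
      rw [hE_def]
      have : Real.exp (2 * δ * κ * t₁) < Real.exp (2 * δ * κ * t₂) := by
        apply Real.exp_lt_exp.2
        have h2δκ : 0 < 2 * δ * κ := by positivity
        nlinarith
      exact mul_lt_mul_of_pos_right this hB0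
    exact Real.rpow_lt_rpow (hw0 t₁ ht₁).le (by linarith) (by positivity)
  -- image of F
  have hFimage : F '' Ioi 0 = Ioi c := by
    apply Subset.antisymm
    · rintro y ⟨t, ht, rfl⟩
      have h1 : c = (c ^ δ) ^ (1/δ) := by
        rw [← Real.rpow_mul hc.le, mul_one_div, div_self (ne_of_gt hδ0), Real.rpow_one]
      rw [mem_Ioi, h1]
      exact Real.rpow_lt_rpow (Real.rpow_pos_of_pos hc δ).le (hw t ht) (by positivity)
    · intro y hy
      have hy0 : 0 < y := lt_trans hc hy
      have hyδ : c ^ δ < y ^ δ := Real.rpow_lt_rpow hc.le hy hδ0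
      refine ⟨Real.log ((y ^ δ + 1) / B) / (2 * δ * κ), ?_, ?_⟩
      · have h1 : 1 < (y ^ δ + 1) / B := by
          rw [lt_div_iff₀ hB0]
          rw [hcδ] at hyδ
          simp only [hB_def]
          linarith
        have := Real.log_pos h1
        have h2 : 0 < 2 * δ * κ := by positivity
        exact div_pos this h2
      · have h2 : (2 * δ * κ) ≠ 0 := by positivity
        have h3 : 0 < (y ^ δ + 1) / B := by positivity
        rw [hF_def]
        simp only [hE_def]
        rw [mul_div_cancel₀ _ h2, Real.exp_log h3, div_mul_cancel₀ _ (ne_of_gt hB0)]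
        rw [add_sub_cancel_right, ← Real.rpow_mul hy0.le, mul_one_div,
          div_self (ne_of_gt hδ0), Real.rpow_one]
  -- pointwise identity
  have hptwise : ∀ t : ℝ, 0 < t →
      |F' t| • ((F t) ^ (δ - 2) / ((F t) ^ δ + 1))
        = (2 * κ / a) * (κ * n / (E t - 1)) ^ (1/δ) := by
    intro t ht
    have hwt : 0 < E t - 1 := hw0 t ht
    have hFt : F t = (E t - 1) ^ (1/δ) := rfl
    have hFtδ : (F t) ^ δ = E t - 1 := by
      rw [hFt, ← Real.rpow_mul hwt.le, one_div_mul_cancel (ne_of_gt hδ0), Real.rpow_one]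
    have hFtδ2 : (F t) ^ (δ - 2) = (E t - 1) ^ ((δ - 2)/δ) := by
      rw [hFt, ← Real.rpow_mul hwt.le, one_div_mul_eq_div]
    have hF'pos : 0 < F' t := by
      rw [hF'_def]
      have := hEpos t
      have := Real.rpow_pos_of_pos hwt (1/δ - 1)
      positivity
    have hrhs : (κ * n / (E t - 1)) ^ (1/δ) = a * (E t - 1) ^ (-(1/δ)) := by
      rw [Real.div_rpow hκn.le hwt.le, Real.rpow_neg hwt.le, ← ha_def, div_eq_mul_inv]
    have hcomb : (E t - 1) ^ (1/δ - 1) * (E t - 1) ^ ((δ - 2)/δ)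
        = (E t - 1) ^ (-(1/δ)) := by
      rw [← Real.rpow_add hwt]
      congr 1
      field_simp
      ring
    have hEplus : E t - 1 + 1 = E t := by ring
    have hEtne : E t ≠ 0 := ne_of_gt (hEpos t)
    have hfin : ∀ X : ℝ, 2 * κ / a * (a * X) = X * (2 * κ) * 1 := by
      intro X
      field_simp
    rw [abs_of_pos hF'pos, smul_eq_mul, hFtδ, hFtδ2, hrhs, hF'_def, hEplus,
      hfin ((E t - 1) ^ (-(1/δ)))]
    calc 1/δ * (E t - 1) ^ (1/δ - 1) * (2 * δ * κ * E t)
          * ((E t - 1) ^ ((δ - 2)/δ) / E t)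
        = ((E t - 1) ^ (1/δ - 1) * (E t - 1) ^ ((δ - 2)/δ))
            * (1/δ * (2 * δ * κ)) * (E t / E t) := by ring
      _ = (E t - 1) ^ (-(1/δ)) * (2 * κ) * 1 := by
          rw [hcomb, div_self hEtne]
          congr 2
          field_simp
  -- assemble
  have hane : a ≠ 0 := ne_of_gt ha
  have hκne : κ ≠ 0 := ne_of_gt hκ
  have hInj : InjOn F (Ioi 0) := hFmono.injOn
  have hderivWithin : ∀ t ∈ Ioi (0:ℝ), HasDerivWithinAt F (F' t) (Ioi 0) t :=
    fun t ht => (hFderiv t ht).hasDerivWithinAt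
  have hgint : IntegrableOn (fun v : ℝ => v ^ (δ - 2) / (v ^ δ + 1)) (Ioi c) := f_int hc
  have hiff := integrableOn_image_iff_integrableOn_abs_deriv_smul measurableSet_Ioi
    hderivWithin hInj (fun v : ℝ => v ^ (δ - 2) / (v ^ δ + 1))
  rw [hFimage] at hiff
  have hIntAbs : IntegrableOn
      (fun t => |F' t| • ((F t) ^ (δ - 2) / ((F t) ^ δ + 1))) (Ioi 0) := hiff.mp hgint
  have haeeq : (fun t => (a / (2 * κ)) * (|F' t| • ((F t) ^ (δ - 2) / ((F t) ^ δ + 1))))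
      =ᵐ[volume.restrict (Ioi (0:ℝ))]
      (fun t : ℝ =>
        (κ * n / (Real.exp (2 * δ * κ * t) * (1 + κ * n / r ^ δ) - 1)) ^ (1/δ)) := by
    filter_upwards [ae_restrict_mem measurableSet_Ioi] with t ht
    rw [hptwise t ht]
    have h2 : (κ * n / (Real.exp (2 * δ * κ * t) * (1 + κ * n / r ^ δ) - 1)) ^ (1/δ)
        = (κ * n / (E t - 1)) ^ (1/δ) := rfl
    rw [h2]
    field_simp
  constructor
  · exact ((hIntAbs.const_mul (a / (2 * κ))).congr haeeq)
  · have hkey := integral_image_eq_integral_abs_deriv_smul measurableSet_Ioi hderivWithin hInj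
      (fun v : ℝ => v ^ (δ - 2) / (v ^ δ + 1))
    rw [hFimage] at hkey
    calc (∫ t in Ioi (0:ℝ),
            (κ * n / (Real.exp (2 * δ * κ * t) * (1 + κ * n / r ^ δ) - 1)) ^ (1/δ))
        = ∫ t in Ioi (0:ℝ),
            (a / (2 * κ)) * (|F' t| • ((F t) ^ (δ - 2) / ((F t) ^ δ + 1))) :=
          (integral_congr_ae haeeq).symm
      _ = (a / (2 * κ)) * ∫ t in Ioi (0:ℝ),
            |F' t| • ((F t) ^ (δ - 2) / ((F t) ^ δ + 1)) := integral_const_mul _ _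
      _ = (a / (2 * κ)) * ∫ v in Ioi c, v ^ (δ - 2) / (v ^ δ + 1) := by rw [← hkey]

end Stmt1Aux

open Stmt1Aux

/-- Properties of the growth function arising from the `CD_Υ(κ, r^{1+δ}/n)` condition
(Proposition 3.6 of the paper). -/
theorem stmt_1 (δ κ n : ℝ) (hδ : 1 ≤ δ) (hκ : 0 < κ) (hn : 0 < n)
    (Φ : ℝ → ℝ)
    (hΦ : ∀ r : ℝ, Φ r = ((κ * n) ^ (1/δ) / (2 * κ)) *
        ∫ v in Ioi ((κ * n) ^ (1/δ) / r), v ^ (δ - 2) / (v ^ δ + 1)) :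
    (∀ r : ℝ, 0 < r → IntegrableOn (fun v : ℝ => v ^ (δ - 2) / (v ^ δ + 1))
        (Ioi ((κ * n) ^ (1/δ) / r)))
    ∧ (∀ r : ℝ, 0 < r → 0 < Φ r)
    ∧ (∀ r : ℝ, 0 < r → HasDerivAt Φ (n / (2 * (κ * n + r ^ δ))) r)
    ∧ StrictMonoOn Φ (Ioi 0)
    ∧ ConcaveOn ℝ (Ioi 0) Φ
    ∧ ((∃ C : ℝ, ∀ r : ℝ, 0 < r → Φ r ≤ C) ↔ 1 < δ)
    ∧ IntegrableOn (fun s : ℝ => Φ (s ^ 2) / s ^ 2) (Ioi 0)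
    ∧ (∀ r : ℝ, 0 < r →
        IntegrableOn (fun t : ℝ =>
          (κ * n / (Real.exp (2 * δ * κ * t) * (1 + κ * n / r ^ δ) - 1)) ^ (1/δ)) (Ioi 0)
        ∧ (∫ t in Ioi (0:ℝ),
            (κ * n / (Real.exp (2 * δ * κ * t) * (1 + κ * n / r ^ δ) - 1)) ^ (1/δ)) = Φ r) := by
  have hδ0 : 0 < δ := lt_of_lt_of_le one_pos hδ
  have hκn : 0 < κ * n := mul_pos hκ hn
  have ha : 0 < (κ * n) ^ (1/δ) := Real.rpow_pos_of_pos hκn _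
  have hK : 0 < (κ * n) ^ (1/δ) / (2 * κ) := by positivity
  -- part 1
  have hint : ∀ r : ℝ, 0 < r → IntegrableOn (fun v : ℝ => v ^ (δ - 2) / (v ^ δ + 1))
      (Ioi ((κ * n) ^ (1/δ) / r)) := fun r hr => f_int (div_pos ha hr)
  -- part 2
  have hpos : ∀ r : ℝ, 0 < r → 0 < Φ r := by
    intro r hr
    rw [hΦ r]
    exact mul_pos hK (integral_f_pos (div_pos ha hr))
  -- part 3
  have hderiv : ∀ r : ℝ, 0 < r → HasDerivAt Φ (n / (2 * (κ * n + r ^ δ))) r :=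
    fun r hr => hasDerivAt_Phi hδ hκ hn hΦ hr
  have hcont : ContinuousOn Φ (Ioi 0) :=
    fun r hr => ((hderiv r hr).differentiableAt.continuousAt).continuousWithinAt
  have hderiv' : ∀ r ∈ interior (Ioi (0:ℝ)), deriv Φ r = n / (2 * (κ * n + r ^ δ)) := by
    intro r hr
    rw [interior_Ioi] at hr
    exact (hderiv r hr).deriv
  -- part 4
  have hmono : StrictMonoOn Φ (Ioi 0) := by
    apply strictMonoOn_of_deriv_pos (convex_Ioi 0) hcont
    intro x hx
    rw [hderiv' x hx]
    rw [interior_Ioi] at hx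
    have hx' : (0:ℝ) < x := hx
    have := Real.rpow_pos_of_pos hx' δ
    positivity
  -- part 5
  have hconc : ConcaveOn ℝ (Ioi 0) Φ := by
    apply AntitoneOn.concaveOn_of_deriv (convex_Ioi 0) hcont
    · intro x hx
      rw [interior_Ioi] at hx
      exact (hderiv x hx).differentiableAt.differentiableWithinAt
    · intro x hx y hy hxy
      rw [hderiv' x hx, hderiv' y hy]
      rw [interior_Ioi] at hx hy
      have h1 : x ^ δ ≤ y ^ δ := Real.rpow_le_rpow (le_of_lt hx) hxy hδ0.le
      have h2 : (0:ℝ) < x ^ δ := Real.rpow_pos_of_pos hx δ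
      gcongr
  -- FTC on [1, r]
  have hgcont : ∀ r : ℝ, 1 ≤ r →
      ContinuousOn (fun u : ℝ => n / (2 * (κ * n + u ^ δ))) (uIcc 1 r) := by
    intro r hr1
    rw [uIcc_of_le hr1]
    apply ContinuousOn.div continuousOn_const
    · apply ContinuousOn.mul continuousOn_const
      apply ContinuousOn.add continuousOn_const
      intro u hu
      exact (continuousAt_id.rpow_const
        (Or.inl (ne_of_gt (lt_of_lt_of_le one_pos hu.1)))).continuousWithinAt
    · intro u hu
      have hu1 : (1:ℝ) ≤ u := hu.1
      have := Real.rpow_pos_of_pos (lt_of_lt_of_le one_pos hu1) δ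
      positivity
  have hFTC : ∀ r : ℝ, 1 ≤ r →
      (∫ u in (1:ℝ)..r, n / (2 * (κ * n + u ^ δ))) = Φ r - Φ 1 := by
    intro r hr1
    apply intervalIntegral.integral_eq_sub_of_hasDerivAt
    · intro u hu
      rw [uIcc_of_le hr1] at hu
      exact hderiv u (lt_of_lt_of_le one_pos hu.1)
    · exact (hgcont r hr1).intervalIntegrable
  -- boundedness iff
  have hbdd : (∃ C : ℝ, ∀ r : ℝ, 0 < r → Φ r ≤ C) ↔ 1 < δ := by
    constructor
    · rintro ⟨C, hC⟩
      by_contra hlt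
      have hδ1 : δ = 1 := le_antisymm (not_lt.mp hlt) hδ
      subst hδ1
      -- Φ r = Φ 1 + (n/2) (log (κn + r) - log (κn + 1)) for r ≥ 1
      have hlog : ∀ r : ℝ, 1 ≤ r →
          Φ r - Φ 1 = n/2 * Real.log (κ * n + r) - n/2 * Real.log (κ * n + 1) := by
        intro r hr1
        rw [← hFTC r hr1]
        apply intervalIntegral.integral_eq_sub_of_hasDerivAt
        · intro u hu
          rw [uIcc_of_le hr1] at hu
          have hu0 : (0:ℝ) < κ * n + u := by
            have := hu.1; linarith
          have h1 : HasDerivAt (fun u : ℝ => κ * n + u) 1 u := by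
            simpa using (hasDerivAt_id u).const_add (κ * n)
          have h2 := ((Real.hasDerivAt_log (ne_of_gt hu0)).comp u h1).const_mul (n/2)
          refine h2.congr_deriv ?_
          symm
          rw [Real.rpow_one]
          field_simp
        · exact (hgcont r hr1).intervalIntegrable
      set r₀ : ℝ := max 1 (Real.exp ((2/n) * (C - Φ 1) + Real.log (κ * n + 1))) with hr₀_def
      have hr₀1 : (1:ℝ) ≤ r₀ := le_max_left _ _
      have hr₀0 : (0:ℝ) < r₀ := lt_of_lt_of_le one_pos hr₀1
      have hlogr₀ : (2/n) * (C - Φ 1) + Real.log (κ * n + 1) ≤ Real.log r₀ := by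
        rw [← Real.log_exp ((2/n) * (C - Φ 1) + Real.log (κ * n + 1))]
        exact Real.log_le_log (Real.exp_pos _) (le_max_right _ _)
      have hloglt : Real.log r₀ < Real.log (κ * n + r₀) :=
        Real.log_lt_log hr₀0 (by linarith)
      have hval := hlog r₀ hr₀1
      have hCr := hC r₀ hr₀0
      have hkey : (2/n) * (C - Φ 1) < Real.log (κ * n + r₀) - Real.log (κ * n + 1) := by
        linarith
      have hn2 : (0:ℝ) < n/2 := by linarith
      have := mul_lt_mul_of_pos_left hkey hn2
      rw [show n/2 * ((2/n) * (C - Φ 1)) = C - Φ 1 by field_simp] at this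
      linarith
    · intro hδ1
      refine ⟨Φ 1 + n/2 * (1/(δ - 1)), ?_⟩
      intro r hr
      have hC0 : 0 ≤ n/2 * (1/(δ - 1)) := by
        have : (0:ℝ) < δ - 1 := by linarith
        positivity
      rcases le_total r 1 with h1 | h1
      · rcases eq_or_lt_of_le h1 with rfl | h1'
        · linarith
        · have := hmono.monotoneOn (mem_Ioi.2 hr) (mem_Ioi.2 one_pos) h1
          linarith
      · -- r ≥ 1
        have hFr := hFTC r h1
        have hb1 : (∫ u in (1:ℝ)..r, n / (2 * (κ * n + u ^ δ)))
            ≤ ∫ u in (1:ℝ)..r, (n/2) * u ^ (-δ) := by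
          apply intervalIntegral.integral_mono_on h1
            ((hgcont r h1).intervalIntegrable)
          · apply ContinuousOn.intervalIntegrable
            apply ContinuousOn.mul continuousOn_const
            rw [uIcc_of_le h1]
            intro u hu
            exact (continuousAt_id.rpow_const
              (Or.inl (ne_of_gt (lt_of_lt_of_le one_pos hu.1)))).continuousWithinAt
          · intro u hu
            have hu0 : (0:ℝ) < u := lt_of_lt_of_le one_pos hu.1
            have huδ : (0:ℝ) < u ^ δ := Real.rpow_pos_of_pos hu0 δ
            rw [Real.rpow_neg hu0.le]
            rw [show (n/2) * (u ^ δ)⁻¹ = n / (2 * u ^ δ) by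
              rw [mul_comm, inv_mul_eq_div, div_div]]
            gcongr
            linarith
        have hb2 : (∫ u in (1:ℝ)..r, (n/2) * u ^ (-δ)) ≤ n/2 * (1/(δ - 1)) := by
          rw [intervalIntegral.integral_const_mul]
          have h3 : (∫ u in (1:ℝ)..r, u ^ (-δ)) ≤ ∫ u in Ioi (1:ℝ), u ^ (-δ) := by
            rw [intervalIntegral.integral_of_le h1]
            apply setIntegral_mono_set (integrableOn_Ioi_rpow_of_lt (by linarith) one_pos)
            · filter_upwards [ae_restrict_mem measurableSet_Ioi] with u hu
              exact Real.rpow_nonneg (le_of_lt (lt_trans one_pos hu)) _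
            · exact HasSubset.Subset.eventuallyLE Ioc_subset_Ioi_self
          have h4 : (∫ u in Ioi (1:ℝ), u ^ (-δ)) = 1/(δ - 1) := by
            rw [integral_Ioi_rpow_of_lt (by linarith) one_pos, Real.one_rpow,
              show (-δ + 1 : ℝ) = -(δ - 1) by ring, div_neg, neg_div, neg_neg]
          rw [h4] at h3
          have hn2 : (0:ℝ) ≤ n/2 := by linarith
          exact mul_le_mul_of_nonneg_left h3 hn2
        linarith
  -- linear bound near 0
  have hane : (κ * n) ^ (1/δ) ≠ 0 := ne_of_gt ha
  have hκne : κ ≠ 0 := ne_of_gt hκ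
  have hΦle : ∀ r : ℝ, 0 < r → Φ r ≤ r / (2 * κ) := by
    intro r hr
    rw [hΦ r]
    have h1 := integral_f_le (δ := δ) (div_pos ha hr)
    rw [inv_div] at h1
    have h2 := mul_le_mul_of_nonneg_left h1 hK.le
    refine le_trans h2 (le_of_eq ?_)
    field_simp
  -- logarithmic bound at infinity
  have hΦlog : ∀ R : ℝ, 1 ≤ R → Φ R ≤ Φ 1 + n/2 * Real.log R := by
    intro R hR
    have hFr := hFTC R hR
    have hb1 : (∫ u in (1:ℝ)..R, n / (2 * (κ * n + u ^ δ)))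
        ≤ ∫ u in (1:ℝ)..R, (n/2) * (1/u) := by
      apply intervalIntegral.integral_mono_on hR ((hgcont R hR).intervalIntegrable)
      · apply ContinuousOn.intervalIntegrable
        apply ContinuousOn.mul continuousOn_const
        rw [uIcc_of_le hR]
        apply ContinuousOn.div continuousOn_const continuousOn_id
        intro u hu
        exact ne_of_gt (lt_of_lt_of_le one_pos hu.1)
      · intro u hu
        have hu1 : (1:ℝ) ≤ u := hu.1
        have hu0 : (0:ℝ) < u := lt_of_lt_of_le one_pos hu1
        have h2 : u ≤ κ * n + u ^ δ := by
          have h3 : u ^ (1:ℝ) ≤ u ^ δ := Real.rpow_le_rpow_of_exponent_le hu1 hδ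
          rw [Real.rpow_one] at h3
          linarith
        rw [show (n/2) * (1/u) = n/(2*u) by rw [div_mul_div_comm, mul_one]]
        gcongr
    have hb2 : (∫ u in (1:ℝ)..R, (n/2) * (1/u)) = n/2 * Real.log R := by
      rw [intervalIntegral.integral_const_mul, integral_one_div (by
        rw [uIcc_of_le hR]
        intro h
        exact absurd h.1 (by norm_num)), div_one]
    linarith
  -- sqrt bound on log
  have hsqrt_log : ∀ s : ℝ, 1 ≤ s → Real.log s ≤ 2 * Real.sqrt s := by
    intro s hs
    have hs0 : (0:ℝ) < s := lt_of_lt_of_le one_pos hs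
    have h1 : Real.log (Real.sqrt s) ≤ Real.sqrt s - 1 :=
      Real.log_le_sub_one_of_pos (Real.sqrt_pos.2 hs0)
    have h2 : Real.log (Real.sqrt s) = Real.log s / 2 := Real.log_sqrt hs0.le
    rw [h2] at h1
    nlinarith [Real.sqrt_nonneg s]
  -- continuity of the quotient
  have hcont2 : ContinuousOn (fun s : ℝ => Φ (s ^ 2) / s ^ 2) (Ioi 0) := by
    apply ContinuousOn.div
    · apply hcont.comp (continuous_pow 2).continuousOn
      intro s hs
      exact mem_Ioi.2 (pow_pos hs 2)
    · exact (continuous_pow 2).continuousOn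
    · intro s hs
      exact pow_ne_zero 2 (ne_of_gt hs)
  -- integrability of Φ(s²)/s²
  have hintOn : IntegrableOn (fun s : ℝ => Φ (s ^ 2) / s ^ 2) (Ioi 0) := by
    rw [← Ioc_union_Ioi_eq_Ioi (zero_le_one : (0:ℝ) ≤ 1)]
    apply IntegrableOn.union
    · apply Integrable.mono' (g := fun _ : ℝ => 1/(2*κ))
        (integrableOn_const measure_Ioc_lt_top.ne)
        ((hcont2.mono Ioc_subset_Ioi_self).aestronglyMeasurable measurableSet_Ioc)
      filter_upwards [ae_restrict_mem measurableSet_Ioc] with s hs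
      have hs0 : (0:ℝ) < s := hs.1
      have hs2 : (0:ℝ) < s ^ 2 := pow_pos hs0 2
      have h2 : 0 ≤ Φ (s ^ 2) / s ^ 2 := div_nonneg (hpos _ hs2).le hs2.le
      rw [Real.norm_eq_abs, abs_of_nonneg h2]
      calc Φ (s ^ 2) / s ^ 2 ≤ (s ^ 2 / (2 * κ)) / s ^ 2 := by
            gcongr
            exact hΦle _ hs2
        _ = 1/(2*κ) := by
            rw [div_right_comm, div_self (ne_of_gt hs2)]
    · apply Integrable.mono' (g := fun s : ℝ => (Φ 1 + 2*n) * s ^ (-(3:ℝ)/2))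
        ((integrableOn_Ioi_rpow_of_lt (by norm_num) one_pos).const_mul _)
        ((hcont2.mono (Ioi_subset_Ioi zero_le_one)).aestronglyMeasurable measurableSet_Ioi)
      filter_upwards [ae_restrict_mem measurableSet_Ioi] with s hs
      have hs1 : (1:ℝ) < s := hs
      have hs0 : (0:ℝ) < s := lt_trans one_pos hs1
      have hs2 : (0:ℝ) < s ^ 2 := pow_pos hs0 2
      have h12 : (1:ℝ) ≤ s ^ 2 := by nlinarith
      have hA : Φ (s ^ 2) ≤ Φ 1 + n/2 * Real.log (s ^ 2) := hΦlog _ h12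
      have hlog2 : Real.log (s ^ 2) = 2 * Real.log s := by
        rw [Real.log_pow]
        norm_num
      have hls : Real.log s ≤ 2 * Real.sqrt s := hsqrt_log s hs1.le
      have hsq1 : 1 ≤ Real.sqrt s := by
        rw [show (1:ℝ) = Real.sqrt 1 by rw [Real.sqrt_one]]
        exact Real.sqrt_le_sqrt hs1.le
      have hΦ1 : 0 < Φ 1 := hpos 1 one_pos
      have hB : Φ (s ^ 2) ≤ (Φ 1 + 2*n) * Real.sqrt s := by nlinarith [Real.sqrt_nonneg s]
      rw [Real.norm_eq_abs, abs_of_nonneg (div_nonneg (hpos _ hs2).le hs2.le)]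
      have hrw : Real.sqrt s / s ^ 2 = s ^ (-(3:ℝ)/2) := by
        rw [Real.sqrt_eq_rpow, ← Real.rpow_natCast s 2, ← Real.rpow_sub hs0]
        norm_num
      calc Φ (s ^ 2) / s ^ 2 ≤ ((Φ 1 + 2*n) * Real.sqrt s) / s ^ 2 := by gcongr
        _ = (Φ 1 + 2*n) * (Real.sqrt s / s ^ 2) := by ring
        _ = (Φ 1 + 2*n) * s ^ (-(3:ℝ)/2) := by rw [hrw]
  refine ⟨hint, hpos, hderiv, hmono, hconc, hbdd, hintOn, ?_⟩
  intro r hr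
  obtain ⟨i1, i2⟩ := subst_lemma hδ hκ hn hr
  exact ⟨i1, by rw [hΦ r]; exact i2⟩
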